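/- For every decreasing function φ : ℝ₊ → ℝ₊ with φ(y) = o(y⁻¹) as y → ∞, there is an uncountable set of real numbers α satisfying: the inequality ‖q·α‖ < φ(q) has infinitely many solutions in positive integers q, but for every ε > 0 the inequality ‖q·α‖ < (1−ε)·φ(q) has only finitely many solutions in positive integers q. -/

import Mathlib

noncomputable def distNearestInt (t : ℝ) : ℝ := |t - round t|

namespace Jarnik

/-- State of the construction: numerator, denominator, sign. -/
structure St where
  p : ℤ
  q : ℕ
  s : ℤ

variable (φ : ℝ → ℝ) (N : ℕ)

/-- Bundled standing hypotheses. -/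
structure Hyp : Prop where
  pos : ∀ x : ℝ, 0 < x → 0 < φ x
  dec : ∀ x y : ℝ, 0 < x → x < y → φ y < φ x
  bound : ∀ y : ℝ, (N:ℝ) ≤ y → φ y * y ≤ 1/16
  Npos : 1 ≤ N

/-- The adaptive epsilon. -/
def E (q : ℕ) : ℝ := 8 * (φ q * q)

def GoodSt (t : St) : Prop := N ≤ t.q ∧ IsCoprime t.p (t.q : ℤ) ∧ (t.s = 1 ∨ t.s = -1)

def StepRel (t u : St) : Prop :=
  (t.q : ℤ) * u.p - t.p * u.q = t.s ∧ u.s = -t.s ∧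
  1 < φ t.q * u.q ∧ (1 - E φ t.q / 2) * (φ t.q * u.q) < 1

variable {φ N}

lemma Hyp.qpos (h : Hyp φ N) {q : ℕ} (hq : N ≤ q) : 0 < (q:ℝ) := by
  have : 1 ≤ q := le_trans h.Npos hq
  exact_mod_cast Nat.lt_of_lt_of_le Nat.zero_lt_one this

lemma Hyp.phipos (h : Hyp φ N) {q : ℕ} (hq : N ≤ q) : 0 < φ q := h.pos _ (h.qpos hq)

lemma Hyp.cbound (h : Hyp φ N) {q : ℕ} (hq : N ≤ q) : φ q * q ≤ 1/16 :=
  h.bound _ (by exact_mod_cast hq)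

lemma Hyp.cpos (h : Hyp φ N) {q : ℕ} (hq : N ≤ q) : 0 < φ q * q :=
  mul_pos (h.phipos hq) (h.qpos hq)

lemma Hyp.Epos (h : Hyp φ N) {q : ℕ} (hq : N ≤ q) : 0 < E φ q := by
  have := h.cpos hq; unfold E; linarith

lemma Hyp.Ele (h : Hyp φ N) {q : ℕ} (hq : N ≤ q) : E φ q ≤ 1/2 := by
  have := h.cbound hq; unfold E; linarith

/-- Consequences of a step. -/
lemma step_facts (h : Hyp φ N) {t u : St} (ht : GoodSt N t) (hr : StepRel φ t u) :
    16 * t.q < u.q ∧ GoodSt N u := by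
  obtain ⟨hN, hco, hs⟩ := ht
  obtain ⟨hrel, hsgn, hlo, hhi⟩ := hr
  have hφ := h.phipos hN
  have hc := h.cbound hN
  -- 16 * t.q < u.q over ℝ
  have h16 : (16 : ℝ) * t.q < u.q := by
    have h1 : φ t.q * (16 * t.q) ≤ 1 := by nlinarith
    nlinarith
  have h16' : 16 * t.q < u.q := by exact_mod_cast h16
  refine ⟨h16', ?_, ?_, ?_⟩
  · have : N ≤ 16 * t.q := le_trans (by omega) (Nat.le_mul_of_pos_left _ (by norm_num) : t.q ≤ 16 * t.q)
    omega
  · -- coprimality from the unimodular relation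
    rcases hs with h1 | h1 <;>
    · refine ⟨t.s * t.q, -(t.s * t.p), ?_⟩
      rw [h1] at hrel ⊢
      ring_nf
      ring_nf at hrel
      omega
  · rcases hs with h1 | h1 <;> simp [hsgn, h1]


lemma step_ex (h : Hyp φ N) {t : St} (ht : GoodSt N t) :
    ∃ u w : St, StepRel φ t u ∧ StepRel φ t w ∧ w.q = u.q + t.q := by
  obtain ⟨hN, hco, hs⟩ := ht
  obtain ⟨a, b, hab⟩ := hco
  have hφ := h.phipos hN
  have hqr : (0:ℝ) < (t.q : ℝ) := h.qpos hN
  have hE : 0 < E φ t.q := h.Epos hN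
  have hE2 := h.Ele hN
  have hEdef : E φ t.q = 8 * (φ t.q * t.q) := rfl
  set A : ℝ := 1 / φ t.q with hA
  have hAφ : φ t.q * A = 1 := by rw [hA]; field_simp
  have hApos : 0 < A := by rw [hA]; positivity
  -- base solution of the unimodular equation
  set p₀ : ℤ := t.s * b with hp₀
  set q₀ : ℤ := -(t.s * a) with hq₀
  have hbase : (t.q : ℤ) * p₀ - t.p * q₀ = t.s := by
    rw [hp₀, hq₀]
    have : (t.q:ℤ) * (t.s * b) - t.p * (-(t.s * a)) = t.s * (a * t.p + b * t.q) := by ring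
    rw [this, hab, mul_one]
  set t₁ : ℤ := ⌊(A - (q₀:ℝ)) / (t.q:ℝ)⌋ + 1 with ht₁
  have hfl : A - (q₀:ℝ) < (t₁:ℝ) * (t.q:ℝ) := by
    have h1 : (A - (q₀:ℝ)) / (t.q:ℝ) < (t₁:ℝ) := by
      rw [ht₁]; push_cast; exact Int.lt_floor_add_one _
    have := mul_lt_mul_of_pos_right h1 hqr
    rwa [div_mul_cancel₀ _ (ne_of_gt hqr)] at this
  have hfl2 : (t₁:ℝ) * (t.q:ℝ) ≤ A - (q₀:ℝ) + (t.q:ℝ) := by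
    have h1 : (t₁:ℝ) ≤ (A - (q₀:ℝ)) / (t.q:ℝ) + 1 := by
      rw [ht₁]; push_cast
      have := Int.floor_le ((A - (q₀:ℝ)) / (t.q:ℝ))
      linarith
    have := mul_le_mul_of_nonneg_right h1 hqr.le
    rw [add_mul, div_mul_cancel₀ _ (ne_of_gt hqr), one_mul] at this
    linarith
  -- properties of a shifted solution
  have key : ∀ j : ℤ, 0 ≤ j → j ≤ 1 →
      StepRel φ t ⟨p₀ + (t₁ + j) * t.p, (q₀ + (t₁ + j) * t.q).toNat, -t.s⟩ ∧
        ((q₀ + (t₁ + j) * t.q).toNat : ℤ) = q₀ + (t₁ + j) * t.q := by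
    intro j hj0 hj1
    have hj0' : (0:ℝ) ≤ (j:ℝ) := by exact_mod_cast hj0
    have hj1' : (j:ℝ) ≤ 1 := by exact_mod_cast hj1
    have hZlow : A < ((q₀ + (t₁ + j) * t.q : ℤ) : ℝ) := by push_cast; nlinarith
    have hZhigh : ((q₀ + (t₁ + j) * t.q : ℤ) : ℝ) ≤ A + 2 * (t.q:ℝ) := by push_cast; nlinarith
    have hZpos : 0 ≤ q₀ + (t₁ + j) * t.q := by
      by_contra hcon
      push_neg at hcon
      have : ((q₀ + (t₁ + j) * t.q : ℤ) : ℝ) < 0 := by exact_mod_cast hcon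
      linarith
    have hcast : ((q₀ + (t₁ + j) * t.q).toNat : ℤ) = q₀ + (t₁ + j) * t.q :=
      Int.toNat_of_nonneg hZpos
    have hcastR : (((q₀ + (t₁ + j) * t.q).toNat : ℕ) : ℝ) = ((q₀ + (t₁ + j) * t.q : ℤ) : ℝ) := by
      exact_mod_cast congrArg (fun z : ℤ => (z : ℝ)) hcast
    refine ⟨⟨?_, rfl, ?_, ?_⟩, hcast⟩
    · show (t.q : ℤ) * (p₀ + (t₁ + j) * t.p) - t.p * ((q₀ + (t₁ + j) * t.q).toNat) = t.s
      rw [hcast]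
      have : (t.q : ℤ) * (p₀ + (t₁ + j) * t.p) - t.p * (q₀ + (t₁ + j) * t.q)
          = (t.q : ℤ) * p₀ - t.p * q₀ := by ring
      rw [this, hbase]
    · show 1 < φ t.q * ((q₀ + (t₁ + j) * t.q).toNat : ℕ)
      rw [hcastR]
      calc (1:ℝ) = φ t.q * A := hAφ.symm
        _ < _ := by exact mul_lt_mul_of_pos_left hZlow hφ
    · show (1 - E φ t.q / 2) * (φ t.q * ((q₀ + (t₁ + j) * t.q).toNat : ℕ)) < 1
      rw [hcastR]
      have h1 : φ t.q * ((q₀ + (t₁ + j) * t.q : ℤ) : ℝ) ≤ 1 + E φ t.q / 4 := by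
        have := mul_le_mul_of_nonneg_left hZhigh hφ.le
        rw [mul_add] at this
        rw [hAφ] at this
        rw [hEdef]
        nlinarith
      nlinarith [mul_pos hφ (lt_trans hApos hZlow)]
  obtain ⟨hu, hucast⟩ := key 0 le_rfl zero_le_one
  obtain ⟨hw, hwcast⟩ := key 1 zero_le_one le_rfl
  refine ⟨_, _, hu, hw, ?_⟩
  show (q₀ + (t₁ + 1) * t.q).toNat = (q₀ + (t₁ + 0) * t.q).toNat + t.q
  have hr : (t₁ + 1) * (t.q:ℤ) = (t₁ + 0) * t.q + t.q := by ring
  omega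




end Jarnik
namespace Jarnik

open scoped Classical in
/-- The next state, with a binary choice. -/
noncomputable def nxt (φ : ℝ → ℝ) (N : ℕ) (t : St) (b : Bool) : St :=
  if h : Hyp φ N ∧ GoodSt N t then
    (if b then (step_ex h.1 h.2).choose_spec.choose else (step_ex h.1 h.2).choose)
  else t

/-- The orbit of a binary sequence. -/
noncomputable def orb (φ : ℝ → ℝ) (N : ℕ) (s : ℕ → Bool) : ℕ → St
  | 0 => ⟨1, N, 1⟩
  | k + 1 => nxt φ N (orb φ N s k) (s k)

variable {φ : ℝ → ℝ} {N : ℕ}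

lemma nxt_spec (h : Hyp φ N) {t : St} (ht : GoodSt N t) (b : Bool) :
    StepRel φ t (nxt φ N t b) := by
  rw [nxt, dif_pos ⟨h, ht⟩]
  rcases b with _ | _
  · simp only [if_false, Bool.false_eq_true]
    exact (step_ex h ht).choose_spec.choose_spec.1
  · simp only [if_true]
    exact (step_ex h ht).choose_spec.choose_spec.2.1

lemma nxt_qdiff (h : Hyp φ N) {t : St} (ht : GoodSt N t) :
    (nxt φ N t true).q = (nxt φ N t false).q + t.q := by
  simp only [nxt, dif_pos (And.intro h ht), if_true, Bool.false_eq_true, if_false]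
  exact (step_ex h ht).choose_spec.choose_spec.2.2

lemma orb_good (h : Hyp φ N) (s : ℕ → Bool) : ∀ k, GoodSt N (orb φ N s k)
  | 0 => ⟨le_rfl, isCoprime_one_left, Or.inl rfl⟩
  | (k+1) => (step_facts h (orb_good h s k) (nxt_spec h (orb_good h s k) (s k))).2

lemma orb_rel (h : Hyp φ N) (s : ℕ → Bool) (k : ℕ) :
    StepRel φ (orb φ N s k) (orb φ N s (k+1)) :=
  nxt_spec h (orb_good h s k) (s k)

lemma orb_qgrow (h : Hyp φ N) (s : ℕ → Bool) (k : ℕ) :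
    16 * (orb φ N s k).q < (orb φ N s (k+1)).q :=
  (step_facts h (orb_good h s k) (orb_rel h s k)).1

lemma orb_qpow (h : Hyp φ N) (s : ℕ → Bool) (k : ℕ) : 16 ^ k ≤ (orb φ N s k).q := by
  induction k with
  | zero => show 16 ^ 0 ≤ N; simpa using h.Npos
  | succ k ih =>
      have h1 := orb_qgrow h s k
      calc 16 ^ (k+1) = 16 * 16 ^ k := by ring
        _ ≤ 16 * (orb φ N s k).q := by omega
        _ ≤ (orb φ N s (k+1)).q := h1.le

lemma orb_qmono (h : Hyp φ N) (s : ℕ → Bool) : StrictMono fun k => (orb φ N s k).q := by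
  apply strictMono_nat_of_lt_succ
  intro k
  have h1 := orb_qgrow h s k
  have h2 : 1 ≤ (orb φ N s k).q := le_trans h.Npos (orb_good h s k).1
  omega

/-- Division-form bounds on the growth of denominators. -/
lemma rel_div (h : Hyp φ N) {t u : St} (ht : GoodSt N t) (hr : StepRel φ t u) :
    (0:ℝ) < u.q ∧ 1 / (u.q:ℝ) < φ t.q ∧ (1 - E φ t.q / 2) * φ t.q < 1 / (u.q:ℝ) := by
  have hgood := (step_facts h ht hr).2
  have hu : (0:ℝ) < u.q := h.qpos hgood.1
  have hφ := h.phipos ht.1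
  obtain ⟨-, -, hlo, hhi⟩ := hr
  refine ⟨hu, ?_, ?_⟩
  · rw [div_lt_iff₀ hu]
    nlinarith
  · rw [lt_div_iff₀ hu]
    nlinarith


/-- The signed error `σ_k (q_k α - p_k)`. -/
noncomputable def th (φ : ℝ → ℝ) (N : ℕ) (s : ℕ → Bool) (k : ℕ) (α : ℝ) : ℝ :=
  ((orb φ N s k).s : ℝ) * ((orb φ N s k).q * α - (orb φ N s k).p)

/-- Strict membership in the `k`-th interval. -/
def Mem (φ : ℝ → ℝ) (N : ℕ) (s : ℕ → Bool) (α : ℝ) (k : ℕ) : Prop :=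
  (1 - E φ (orb φ N s k).q) * φ (orb φ N s k).q < th φ N s k α ∧
    th φ N s k α < 1 / (orb φ N s (k+1)).q

/-- Weak membership in the `k`-th interval. -/
def MemCl (φ : ℝ → ℝ) (N : ℕ) (s : ℕ → Bool) (α : ℝ) (k : ℕ) : Prop :=
  (1 - E φ (orb φ N s k).q) * φ (orb φ N s k).q ≤ th φ N s k α ∧
    th φ N s k α ≤ 1 / (orb φ N s (k+1)).q

lemma Mem.cl {s : ℕ → Bool} {α : ℝ} {k : ℕ} (hm : Mem φ N s α k) : MemCl φ N s α k :=
  ⟨hm.1.le, hm.2.le⟩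

lemma sign_sq (h : Hyp φ N) (s : ℕ → Bool) (k : ℕ) :
    ((orb φ N s k).s : ℝ) * ((orb φ N s k).s : ℝ) = 1 := by
  rcases (orb_good h s k).2.2 with h1 | h1 <;> rw [h1] <;> norm_num

/-- The key identity relating consecutive signed errors. -/
lemma th_succ (h : Hyp φ N) (s : ℕ → Bool) (k : ℕ) (α : ℝ) :
    th φ N s k α * (orb φ N s (k+1)).q = 1 - (orb φ N s k).q * th φ N s (k+1) α := by
  obtain ⟨hrel, hsgn, -, -⟩ := orb_rel h s k
  have hrelR : ((orb φ N s k).q : ℝ) * ((orb φ N s (k+1)).p : ℝ)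
      - ((orb φ N s k).p : ℝ) * ((orb φ N s (k+1)).q : ℝ) = ((orb φ N s k).s : ℝ) := by
    exact_mod_cast congrArg (fun z : ℤ => (z : ℝ)) hrel
  have hsgnR : ((orb φ N s (k+1)).s : ℝ) = -((orb φ N s k).s : ℝ) := by
    exact_mod_cast congrArg (fun z : ℤ => (z : ℝ)) hsgn
  have hσ2 := sign_sq h s k
  unfold th
  rw [hsgnR]
  linear_combination ((orb φ N s k).s : ℝ) * hrelR + hσ2

/-- One step down for membership. -/
lemma mem_step (h : Hyp φ N) {s : ℕ → Bool} {α : ℝ} {k : ℕ}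
    (hm : MemCl φ N s α (k+1)) : Mem φ N s α k := by
  have hgt := orb_good h s k
  have hgu := orb_good h s (k+1)
  have hdiv := rel_div h hgt (orb_rel h s k)
  have hdiv1 := rel_div h hgu (orb_rel h s (k+1))
  obtain ⟨hu0, hBu, hBl⟩ := hdiv
  obtain ⟨hw0, hCu, hCl⟩ := hdiv1
  have hφt := h.phipos hgt.1
  have hφu := h.phipos hgu.1
  have hEt := h.Epos hgt.1
  have hEt2 := h.Ele hgt.1
  have hEu := h.Epos hgu.1
  have hEu2 := h.Ele hgu.1
  have ht0 : (0:ℝ) < (orb φ N s k).q := h.qpos hgt.1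
  have hcu : φ (orb φ N s (k+1)).q * (orb φ N s (k+1)).q ≤ 1/16 := h.cbound hgu.1
  have hid := th_succ h s k α
  obtain ⟨hml, hmu⟩ := hm
  set A := th φ N s (k+1) α with hAdef
  set Et := E φ (orb φ N s k).q with hEtdef
  set ft := φ ((orb φ N s k).q : ℝ) with hftdef
  set fu := φ ((orb φ N s (k+1)).q : ℝ) with hfudef
  set q0 : ℝ := ((orb φ N s k).q : ℝ)
  set q1 : ℝ := ((orb φ N s (k+1)).q : ℝ)
  set q2 : ℝ := ((orb φ N s (k+2)).q : ℝ)
  -- A is positive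
  have hApos : 0 < A := by
    have : 0 < (1 - E φ (orb φ N s (k+1)).q) * fu := by
      have := h.Ele hgu.1
      nlinarith
    exact lt_of_lt_of_le this hml
  constructor
  · -- lower bound
    -- t.q * A is small
    have h5 : 1 / q2 < ft / 16 := by
      have h3 : fu * q1 ≤ 1/16 := hcu
      have h4 : fu ≤ 1/16 * (1/q1) := by
        rw [mul_one_div, le_div_iff₀ hu0]; exact h3
      have h4' : (1:ℝ)/16 * (1/q1) < ft/16 := by linarith [hBu]
      have : (1:ℝ)/q2 < fu := hCu
      linarith
    have h6 : q0 * A ≤ Et / 128 := by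
      have hqf : q0 * ft = Et / 8 := by rw [hEtdef]; unfold E; ring_nf; exact mul_comm _ _
      have h7 : q0 * A ≤ q0 * (1/q2) := by
        apply mul_le_mul_of_nonneg_left hmu ht0.le
      have h8 : q0 * (1/q2) ≤ q0 * (ft/16) := by
        apply mul_le_mul_of_nonneg_left h5.le ht0.le
      nlinarith
    -- conclude
    have hth : th φ N s k α = (1 - q0 * A) * (1/q1) := by
      rw [mul_one_div, eq_div_iff (ne_of_gt hu0)]
      exact hid
    have hB0 : (0:ℝ) < 1/q1 := by positivity
    have h9 : (1 - Et/128) * ((1 - Et/2) * ft) < (1 - Et/128) * (1/q1) := by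
      apply mul_lt_mul_of_pos_left hBl
      linarith
    have h10 : (1 - Et/128) * (1/q1) ≤ (1 - q0*A) * (1/q1) := by
      apply mul_le_mul_of_nonneg_right _ hB0.le
      linarith
    have h11 : (1 - Et) * ft ≤ (1 - Et/128) * ((1 - Et/2) * ft) := by nlinarith
    rw [hth]
    linarith
  · -- upper bound
    have h1 : th φ N s k α * q1 < 1 := by
      rw [hid]; nlinarith
    rw [← mul_lt_mul_iff_left₀ hu0, one_div, inv_mul_cancel₀ (ne_of_gt hu0)]
    exact h1


/-- The convergents. -/
noncomputable def cv (φ : ℝ → ℝ) (N : ℕ) (s : ℕ → Bool) (j : ℕ) : ℝ :=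
  ((orb φ N s j).p : ℝ) / ((orb φ N s j).q : ℝ)

lemma mem_base (h : Hyp φ N) (s : ℕ → Bool) (k : ℕ) :
    MemCl φ N s (cv φ N s (k+1)) k := by
  have hgt := orb_good h s k
  obtain ⟨hu0, hBu, hBl⟩ := rel_div h hgt (orb_rel h s k)
  have hφt := h.phipos hgt.1
  have hEt := h.Epos hgt.1
  have hth1 : th φ N s (k+1) (cv φ N s (k+1)) = 0 := by
    unfold th cv
    rw [mul_div_cancel₀ _ (ne_of_gt hu0)]
    ring
  have hid := th_succ h s k (cv φ N s (k+1))
  rw [hth1, mul_zero, sub_zero] at hid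
  have hth : th φ N s k (cv φ N s (k+1)) = 1 / ((orb φ N s (k+1)).q : ℝ) := by
    rw [eq_div_iff (ne_of_gt hu0)]; exact hid
  unfold MemCl
  rw [hth]
  exact ⟨by nlinarith, le_rfl⟩

lemma mem_down (h : Hyp φ N) {s : ℕ → Bool} {α : ℝ} :
    ∀ {d k : ℕ}, MemCl φ N s α (k + d) → MemCl φ N s α k := by
  intro d
  induction d with
  | zero => intro k hm; exact hm
  | succ d ih =>
      intro k hm
      have : MemCl φ N s α (k + 1 + d) := by
        have : k + (d + 1) = k + 1 + d := by omega
        rwa [this] at hm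
      exact (mem_step h (ih this)).cl

lemma cv_mem (h : Hyp φ N) (s : ℕ → Bool) {k j : ℕ} (hkj : k + 2 ≤ j) :
    Mem φ N s (cv φ N s j) k := by
  obtain ⟨m, rfl⟩ : ∃ m, j = (k + 1) + (m + 1) := ⟨j - k - 2, by omega⟩
  have hb : MemCl φ N s (cv φ N s ((k + 1 + m) + 1)) (k + 1 + m) := mem_base h s _
  have : MemCl φ N s (cv φ N s (k + 1 + (m+1))) ((k + 1) + m) := by
    convert hb using 2 <;> omega
  exact mem_step h (mem_down h this)

lemma cv_dist (h : Hyp φ N) (s : ℕ → Bool) (j : ℕ) :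
    dist (cv φ N s j) (cv φ N s (j+1)) ≤ 1 * (1/16 : ℝ) ^ j := by
  have hgt := orb_good h s j
  obtain ⟨hu0, -, -⟩ := rel_div h hgt (orb_rel h s j)
  have ht0 : (0:ℝ) < ((orb φ N s j).q : ℝ) := h.qpos hgt.1
  obtain ⟨hrel, -, -, -⟩ := orb_rel h s j
  have hrelR : ((orb φ N s j).q : ℝ) * ((orb φ N s (j+1)).p : ℝ)
      - ((orb φ N s j).p : ℝ) * ((orb φ N s (j+1)).q : ℝ) = ((orb φ N s j).s : ℝ) := by
    exact_mod_cast congrArg (fun z : ℤ => (z : ℝ)) hrel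
  have hd : cv φ N s (j+1) - cv φ N s j
      = ((orb φ N s j).s : ℝ) / (((orb φ N s j).q : ℝ) * ((orb φ N s (j+1)).q : ℝ)) := by
    unfold cv
    rw [div_sub_div _ _ (ne_of_gt hu0) (ne_of_gt ht0), ← hrelR]
    rw [mul_comm (((orb φ N s (j+1)).q : ℝ)) (((orb φ N s j).q : ℝ))]
    ring_nf
  have habs : |((orb φ N s j).s : ℝ)| = 1 := by
    rcases hgt.2.2 with h1 | h1 <;> rw [h1] <;> norm_num
  have hq16 : (16:ℝ) ^ j ≤ ((orb φ N s j).q : ℝ) := by exact_mod_cast orb_qpow h s j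
  have hq1' : (1:ℝ) ≤ ((orb φ N s (j+1)).q : ℝ) := by
    have : 1 ≤ (orb φ N s (j+1)).q := le_trans h.Npos (orb_good h s (j+1)).1
    exact_mod_cast this
  rw [dist_comm, Real.dist_eq, hd, abs_div, habs, abs_mul,
    abs_of_pos ht0, abs_of_pos hu0]
  rw [one_mul, div_pow, one_pow, div_le_div_iff₀ (by positivity) (by positivity)]
  have h16 : (0:ℝ) < 16 ^ j := by positivity
  nlinarith

lemma cv_cauchy (h : Hyp φ N) (s : ℕ → Bool) : CauchySeq (cv φ N s) :=
  cauchySeq_of_le_geometric (1/16 : ℝ) 1 (by norm_num) (cv_dist h s)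

/-- The limit point. -/
noncomputable def alph (φ : ℝ → ℝ) (N : ℕ) (s : ℕ → Bool) : ℝ :=
  Filter.limUnder Filter.atTop (cv φ N s)

lemma alph_tendsto (h : Hyp φ N) (s : ℕ → Bool) :
    Filter.Tendsto (cv φ N s) Filter.atTop (nhds (alph φ N s)) :=
  (cv_cauchy h s).tendsto_limUnder

lemma th_tendsto (h : Hyp φ N) (s : ℕ → Bool) (k : ℕ) :
    Filter.Tendsto (fun j => th φ N s k (cv φ N s j)) Filter.atTop
      (nhds (th φ N s k (alph φ N s))) := by
  have hc : Continuous (th φ N s k) := by unfold th; continuity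
  exact (hc.tendsto _).comp (alph_tendsto h s)

lemma alph_memcl (h : Hyp φ N) (s : ℕ → Bool) (k : ℕ) :
    MemCl φ N s (alph φ N s) k := by
  constructor
  · apply ge_of_tendsto (th_tendsto h s k)
    filter_upwards [Filter.eventually_ge_atTop (k+2)] with j hj
    exact (cv_mem h s hj).1.le
  · apply le_of_tendsto (th_tendsto h s k)
    filter_upwards [Filter.eventually_ge_atTop (k+2)] with j hj
    exact (cv_mem h s hj).2.le

lemma alph_mem (h : Hyp φ N) (s : ℕ → Bool) (k : ℕ) :
    Mem φ N s (alph φ N s) k :=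
  mem_step h (alph_memcl h s (k+1))


lemma abs_le_abs_add_of_mul_nonneg {u v : ℝ} (h : 0 ≤ u * v) : |u| ≤ |u + v| := by
  rcases le_or_gt 0 u with hu | hu <;> rcases le_or_gt 0 v with hv | hv
  · rw [abs_of_nonneg hu, abs_of_nonneg (by linarith)]; linarith
  · have hu0 : u = 0 := by nlinarith
    simp [hu0]
  · have hv0 : v = 0 := by nlinarith
    simp [hv0]
  · rw [abs_of_nonpos hu.le, abs_of_nonpos (by linarith)]; linarith

/-- The best-approximation property coming from a unimodular pair surrounding `α`. -/
lemma best_approx {σ : ℤ} (hσ : σ = 1 ∨ σ = -1) {p p' : ℤ} {q q' : ℕ}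
    (hrel : (q:ℤ) * p' - p * q' = σ) (hq : 0 < q) (hqq' : q < q') {α : ℝ}
    (hsign : ((q:ℝ) * α - p) * ((q':ℝ) * α - p') ≤ 0)
    (a : ℤ) (b : ℕ) (hb : 0 < b) (hb' : b < q') :
    |(q:ℝ) * α - p| ≤ |(b:ℝ) * α - a| := by
  have hσ2 : σ * σ = 1 := by rcases hσ with h1 | h1 <;> rw [h1] <;> ring
  set x : ℤ := σ * (b * p' - a * q') with hxdef
  set y : ℤ := σ * (a * q - b * p) with hydef
  have hxq : x * q + y * q' = b := by
    rw [hxdef, hydef]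
    linear_combination (σ * b) * hrel + (b : ℤ) * hσ2
  have hxp : x * p + y * p' = a := by
    rw [hxdef, hydef]
    linear_combination (σ * a) * hrel + (a : ℤ) * hσ2
  have hxqR : (x:ℝ) * q + (y:ℝ) * q' = b := by exact_mod_cast congrArg (fun z : ℤ => (z:ℝ)) hxq
  have hxpR : (x:ℝ) * p + (y:ℝ) * p' = a := by exact_mod_cast congrArg (fun z : ℤ => (z:ℝ)) hxp
  have hreal : (b:ℝ) * α - a = (x:ℝ) * ((q:ℝ) * α - p) + (y:ℝ) * ((q':ℝ) * α - p') := by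
    linear_combination hxpR - α * hxqR
  have hqZ : (0:ℤ) < q := by exact_mod_cast hq
  have hq'Z : (b:ℤ) < q' := by exact_mod_cast hb'
  have hbZ : (0:ℤ) < b := by exact_mod_cast hb
  rcases eq_or_ne y 0 with hy | hy
  · -- multiple of q
    rw [hy] at hxq
    simp only [zero_mul, add_zero] at hxq
    have hx1 : 1 ≤ x := by nlinarith
    have hx1R : (1:ℝ) ≤ |(x:ℝ)| := by
      rw [abs_of_pos (by exact_mod_cast hx1 : (0:ℝ) < x)]
      exact_mod_cast hx1
    rw [hreal, hy]
    push_cast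
    rw [zero_mul, add_zero, abs_mul]
    nlinarith [abs_nonneg ((q:ℝ) * α - p)]
  rcases eq_or_ne x 0 with hx | hx
  · exfalso
    rw [hx] at hxq
    simp only [zero_mul, zero_add] at hxq
    have hy1 : 1 ≤ y := by nlinarith
    nlinarith
  · -- x and y have opposite signs
    have hxy : x * y < 0 := by
      rcases lt_or_gt_of_ne hy with hyneg | hypos
      · have hx0 : 0 < x := by nlinarith
        exact mul_neg_of_pos_of_neg hx0 hyneg
      · have hx0 : x < 0 := by nlinarith
        exact mul_neg_of_neg_of_pos hx0 hypos
    have hxyR : ((x:ℝ)) * y < 0 := by exact_mod_cast hxy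
    set u := (x:ℝ) * ((q:ℝ) * α - p) with hudef
    set v := (y:ℝ) * ((q':ℝ) * α - p') with hvdef
    have huv : 0 ≤ u * v := by
      have : u * v = ((x:ℝ) * y) * (((q:ℝ) * α - p) * ((q':ℝ) * α - p')) := by
        rw [hudef, hvdef]; ring
      rw [this]
      nlinarith [mul_nonneg (neg_nonneg.mpr hxyR.le) (neg_nonneg.mpr hsign)]
    have hx1R : (1:ℝ) ≤ |(x:ℝ)| := by
      have : (1:ℤ) ≤ |x| := Int.one_le_abs hx
      calc (1:ℝ) ≤ ((|x| : ℤ) : ℝ) := by exact_mod_cast this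
        _ = |(x:ℝ)| := by push_cast; ring
    calc |(q:ℝ) * α - p| ≤ |u| := by
          rw [hudef, abs_mul]
          nlinarith [abs_nonneg ((q:ℝ) * α - p)]
      _ ≤ |u + v| := abs_le_abs_add_of_mul_nonneg huv
      _ = |(b:ℝ) * α - a| := by rw [hreal]


lemma theta_pos (h : Hyp φ N) (s : ℕ → Bool) (k : ℕ) : 0 < th φ N s k (alph φ N s) := by
  have hm := (alph_mem h s k).1
  have hφ := h.phipos (orb_good h s k).1
  have hE2 := h.Ele (orb_good h s k).1
  nlinarith

lemma err_eq (s : ℕ → Bool) (k : ℕ) (α : ℝ)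
    (h1 : (orb φ N s k).s = 1 ∨ (orb φ N s k).s = -1) :
    ((orb φ N s k).q : ℝ) * α - ((orb φ N s k).p : ℝ)
      = ((orb φ N s k).s : ℝ) * th φ N s k α := by
  unfold th
  rcases h1 with h1 | h1 <;> rw [h1] <;> push_cast <;> ring

lemma abs_err (h : Hyp φ N) (s : ℕ → Bool) (k : ℕ) :
    |((orb φ N s k).q : ℝ) * alph φ N s - ((orb φ N s k).p : ℝ)|
      = th φ N s k (alph φ N s) := by
  rw [err_eq s k _ (orb_good h s k).2.2, abs_mul]
  have habs : |((orb φ N s k).s : ℝ)| = 1 := by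
    rcases (orb_good h s k).2.2 with h1 | h1 <;> rw [h1] <;> norm_num
  rw [habs, one_mul, abs_of_pos (theta_pos h s k)]

lemma approx (h : Hyp φ N) (s : ℕ → Bool) (k : ℕ) :
    distNearestInt (((orb φ N s k).q : ℝ) * alph φ N s) < φ ((orb φ N s k).q : ℝ) := by
  have hu := (alph_mem h s k).2
  have hBu := (rel_div h (orb_good h s k) (orb_rel h s k)).2.1
  have hround := round_le (((orb φ N s k).q : ℝ) * alph φ N s) (orb φ N s k).p
  have habs := abs_err h s k
  calc distNearestInt (((orb φ N s k).q : ℝ) * alph φ N s)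
      ≤ |((orb φ N s k).q : ℝ) * alph φ N s - ((orb φ N s k).p : ℝ)| := hround
    _ = th φ N s k (alph φ N s) := habs
    _ < φ ((orb φ N s k).q : ℝ) := lt_trans hu hBu

lemma dist_lower (h : Hyp φ N) (s : ℕ → Bool) (k : ℕ) (a : ℤ) (b : ℕ) (hb : 0 < b)
    (hb' : b < (orb φ N s (k+1)).q) :
    (1 - E φ (orb φ N s k).q) * φ ((orb φ N s k).q : ℝ)
      < |(b : ℝ) * alph φ N s - (a : ℝ)| := by
  have hgt := orb_good h s k
  obtain ⟨hrel, hsgn, -, -⟩ := orb_rel h s k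
  have hq0 : 0 < (orb φ N s k).q := Nat.lt_of_lt_of_le (Nat.lt_of_lt_of_le Nat.zero_lt_one h.Npos) hgt.1
  have hqq' : (orb φ N s k).q < (orb φ N s (k+1)).q := orb_qmono h s (Nat.lt_succ_self k)
  have hsgnR : ((orb φ N s (k+1)).s : ℝ) = -((orb φ N s k).s : ℝ) := by
    exact_mod_cast congrArg (fun z : ℤ => (z : ℝ)) hsgn
  have hsign : (((orb φ N s k).q : ℝ) * alph φ N s - ((orb φ N s k).p : ℝ))
      * (((orb φ N s (k+1)).q : ℝ) * alph φ N s - ((orb φ N s (k+1)).p : ℝ)) ≤ 0 := by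
    rw [err_eq s k _ hgt.2.2, err_eq s (k+1) _ (orb_good h s (k+1)).2.2, hsgnR]
    have hσ2 := sign_sq h s k
    have e : ((orb φ N s k).s : ℝ) * th φ N s k (alph φ N s)
        * (-((orb φ N s k).s : ℝ) * th φ N s (k+1) (alph φ N s))
        = -((((orb φ N s k).s : ℝ) * ((orb φ N s k).s : ℝ))
            * (th φ N s k (alph φ N s) * th φ N s (k+1) (alph φ N s))) := by ring
    rw [e, hσ2, one_mul]
    have := mul_pos (theta_pos h s k) (theta_pos h s (k+1))
    linarith
  have hba := best_approx hgt.2.2 hrel hq0 hqq' hsign a b hb hb'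
  rw [abs_err h s k] at hba
  have := (alph_mem h s k).1
  linarith

lemma exists_level (h : Hyp φ N) (s : ℕ → Bool) {K b : ℕ} (hK : (orb φ N s K).q ≤ b) :
    ∃ k, K ≤ k ∧ (orb φ N s k).q ≤ b ∧ b < (orb φ N s (k+1)).q := by
  have hex : ∃ m, b < (orb φ N s m).q := by
    refine ⟨b, lt_of_lt_of_le ?_ (orb_qpow h s b)⟩
    exact Nat.lt_pow_self (by norm_num)
  set k' := Nat.find hex with hk'def
  have hk' : b < (orb φ N s k').q := Nat.find_spec hex
  have hk'0 : k' ≠ 0 := by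
    intro h0
    have : (orb φ N s 0).q ≤ (orb φ N s K).q := (orb_qmono h s).monotone (Nat.zero_le K)
    rw [h0] at hk'
    omega
  obtain ⟨k, hkk⟩ : ∃ k, k' = k + 1 := ⟨k' - 1, by omega⟩
  have hQk : (orb φ N s k).q ≤ b := by
    by_contra hcon
    push_neg at hcon
    exact (Nat.find_min hex (by omega : k < k')) hcon
  have hk2 : b < (orb φ N s (k+1)).q := by rw [← hkk]; exact hk'
  refine ⟨k, ?_, hQk, hk2⟩
  by_contra hcon
  push_neg at hcon
  have : (orb φ N s (k+1)).q ≤ (orb φ N s K).q := (orb_qmono h s).monotone (by omega)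
  omega

lemma finiteness (h : Hyp φ N) (s : ℕ → Bool) {ε : ℝ} (hε : 0 < ε) (hε1 : ε ≤ 1) {K : ℕ}
    (hEK : ∀ k, K ≤ k → E φ (orb φ N s k).q ≤ ε) :
    {q : ℕ | 0 < q ∧ distNearestInt (q * alph φ N s) < (1 - ε) * φ q}.Finite := by
  apply Set.Finite.subset (Set.finite_Iio (orb φ N s K).q)
  intro b hbmem
  obtain ⟨hb0, hbdist⟩ := hbmem
  by_contra hcon
  simp only [Set.mem_Iio, not_lt] at hcon
  obtain ⟨k, hKk, hQk, hQk1⟩ := exists_level h s hcon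
  have hlow := dist_lower h s k (round ((b:ℝ) * alph φ N s)) b hb0 hQk1
  have hde : distNearestInt ((b:ℝ) * alph φ N s)
      = |(b:ℝ) * alph φ N s - (round ((b:ℝ) * alph φ N s) : ℤ)| := rfl
  have hq0R : (0:ℝ) < ((orb φ N s k).q : ℝ) := h.qpos (orb_good h s k).1
  have hφb : 0 < φ (b:ℝ) := h.pos _ (by exact_mod_cast hb0)
  have hφle : φ (b:ℝ) ≤ φ ((orb φ N s k).q : ℝ) := by
    rcases Nat.eq_or_lt_of_le hQk with h1 | h1
    · rw [h1]
    · exact (h.dec _ _ hq0R (by exact_mod_cast h1)).le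
  have hEk := hEK k hKk
  have hφk := h.phipos (orb_good h s k).1
  have h2 : (1 - ε) * φ (b:ℝ) ≤ (1 - E φ (orb φ N s k).q) * φ ((orb φ N s k).q : ℝ) := by
    nlinarith
  rw [hde] at hbdist
  linarith

lemma infinitude (h : Hyp φ N) (s : ℕ → Bool) :
    {q : ℕ | 0 < q ∧ distNearestInt (q * alph φ N s) < φ q}.Infinite := by
  apply Set.infinite_of_injective_forall_mem (f := fun k : ℕ => (orb φ N s k).q)
  · exact (orb_qmono h s).injective
  · intro k
    refine ⟨Nat.lt_of_lt_of_le (Nat.lt_of_lt_of_le Nat.zero_lt_one h.Npos) (orb_good h s k).1, ?_⟩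
    exact approx h s k


lemma alph_close (h : Hyp φ N) (s : ℕ → Bool) (k : ℕ) :
    |alph φ N s - cv φ N s (k+1)| < 1 / (16 * ((orb φ N s (k+1)).q : ℝ)^2) := by
  have hg1 := orb_good h s (k+1)
  have hq1 : (0:ℝ) < ((orb φ N s (k+1)).q : ℝ) := h.qpos hg1.1
  have hup := (alph_mem h s (k+1)).2
  have hBu := (rel_div h hg1 (orb_rel h s (k+1))).2.1
  have hcb := h.cbound hg1.1
  have habs := abs_err h s (k+1)
  have hφ1 := h.phipos hg1.1
  -- |α - cv| * q = |qα - p|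
  have hkey : |alph φ N s - cv φ N s (k+1)| * ((orb φ N s (k+1)).q : ℝ)
      = |((orb φ N s (k+1)).q : ℝ) * alph φ N s - ((orb φ N s (k+1)).p : ℝ)| := by
    rw [← abs_of_pos hq1, ← abs_mul]
    congr 1
    unfold cv
    field_simp
    rw [abs_of_pos hq1]
  have h2 : |((orb φ N s (k+1)).q : ℝ) * alph φ N s - ((orb φ N s (k+1)).p : ℝ)|
      < 1 / (16 * ((orb φ N s (k+1)).q : ℝ)) := by
    rw [habs]
    have hφsmall : φ ((orb φ N s (k+1)).q : ℝ) ≤ 1 / (16 * ((orb φ N s (k+1)).q : ℝ)) := by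
      rw [le_div_iff₀ (by positivity)]
      nlinarith
    calc th φ N s (k+1) (alph φ N s) < _ := hup
      _ < φ ((orb φ N s (k+1)).q : ℝ) := hBu
      _ ≤ _ := hφsmall
  rw [← mul_lt_mul_iff_left₀ hq1, hkey]
  calc |((orb φ N s (k+1)).q : ℝ) * alph φ N s - ((orb φ N s (k+1)).p : ℝ)|
      < 1 / (16 * ((orb φ N s (k+1)).q : ℝ)) := h2
    _ = 1 / (16 * ((orb φ N s (k+1)).q : ℝ)^2) * ((orb φ N s (k+1)).q : ℝ) := by
        field_simp

lemma alph_inj (h : Hyp φ N) : Function.Injective (alph φ N) := by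
  intro s t hst
  by_contra hne
  have hex : ∃ k, s k ≠ t k := by
    by_contra hc
    push_neg at hc
    exact hne (funext hc)
  set k := Nat.find hex with hkdef
  have hagree : ∀ j, j ≤ k → orb φ N s j = orb φ N t j := by
    intro j hj
    induction j with
    | zero => rfl
    | succ j ih =>
        have hsj : s j = t j := by
          have hmin := Nat.find_min hex (show j < k by omega)
          exact not_ne_iff.mp hmin
        show nxt φ N (orb φ N s j) (s j) = nxt φ N (orb φ N t j) (t j)
        rw [ih (by omega), hsj]
  have hc : orb φ N t k = orb φ N s k := (hagree k le_rfl).symm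
  have hgc := orb_good h s k
  have hcq0 : (0:ℝ) < ((orb φ N s k).q : ℝ) := h.qpos hgc.1
  -- the two next states
  have hrelu : ((orb φ N s k).q : ℤ) * (orb φ N s (k+1)).p
      - (orb φ N s k).p * (orb φ N s (k+1)).q = (orb φ N s k).s := (orb_rel h s k).1
  have hrelw' := (orb_rel h t k).1
  rw [hc] at hrelw'
  have hrelw : ((orb φ N s k).q : ℤ) * (orb φ N t (k+1)).p
      - (orb φ N s k).p * (orb φ N t (k+1)).q = (orb φ N s k).s := hrelw'
  -- q-difference
  have hsk : s k ≠ t k := Nat.find_spec hex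
  have hqdiff : (orb φ N s (k+1)).q = (orb φ N t (k+1)).q + (orb φ N s k).q ∨
      (orb φ N t (k+1)).q = (orb φ N s (k+1)).q + (orb φ N s k).q := by
    have husb : orb φ N s (k+1) = nxt φ N (orb φ N s k) (s k) := rfl
    have hwtb : orb φ N t (k+1) = nxt φ N (orb φ N t k) (t k) := rfl
    rw [hc] at hwtb
    have hdq := nxt_qdiff h hgc
    rcases Bool.eq_false_or_eq_true (s k) with h1 | h1 <;>
      rcases Bool.eq_false_or_eq_true (t k) with h2 | h2
    · exact absurd (h1.trans h2.symm) hsk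
    · left; rw [husb, hwtb, h1, h2]; exact hdq
    · right; rw [husb, hwtb, h1, h2]; exact hdq
    · exact absurd (h1.trans h2.symm) hsk
  -- both next denominators are large
  have h16u := (step_facts h hgc (orb_rel h s k)).1
  have horbt := orb_rel h t k
  rw [hc] at horbt
  have h16w := (step_facts h hgc horbt).1
  set U : ℝ := ((orb φ N s (k+1)).q : ℝ) with hUdef
  set W : ℝ := ((orb φ N t (k+1)).q : ℝ) with hWdef
  have hU0 : 0 < U := h.qpos (orb_good h s (k+1)).1
  have hW0 : 0 < W := h.qpos (orb_good h t (k+1)).1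
  have hUW1 : U ≤ 2 * W ∧ W ≤ 2 * U := by
    have e1 : (16:ℝ) * ((orb φ N s k).q : ℝ) < U := by
      rw [hUdef]; exact_mod_cast h16u
    have e2 : (16:ℝ) * ((orb φ N s k).q : ℝ) < W := by
      rw [hWdef]; exact_mod_cast h16w
    rcases hqdiff with h1 | h1
    · have : U = W + ((orb φ N s k).q : ℝ) := by rw [hUdef, hWdef]; exact_mod_cast h1
      constructor <;> nlinarith
    · have : W = U + ((orb φ N s k).q : ℝ) := by rw [hUdef, hWdef]; exact_mod_cast h1
      constructor <;> nlinarith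
  -- the convergents are 1/(U*W) apart
  have hDnum : ((orb φ N s k).q : ℤ) * ((orb φ N s (k+1)).p * (orb φ N t (k+1)).q
      - (orb φ N t (k+1)).p * (orb φ N s (k+1)).q)
      = (orb φ N s k).s * ((orb φ N t (k+1)).q - (orb φ N s (k+1)).q) := by
    linear_combination ((orb φ N t (k+1)).q : ℤ) * hrelu - ((orb φ N s (k+1)).q : ℤ) * hrelw
  have hDabs : |(orb φ N s (k+1)).p * ((orb φ N t (k+1)).q : ℤ)
      - (orb φ N t (k+1)).p * (orb φ N s (k+1)).q| = 1 := by
    have hsabs : |(orb φ N s k).s| = 1 := by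
      rcases hgc.2.2 with h1 | h1 <;> rw [h1] <;> norm_num
    have hqd : |((orb φ N t (k+1)).q : ℤ) - (orb φ N s (k+1)).q| = (orb φ N s k).q := by
      rcases hqdiff with h1 | h1
      · have h1' : ((orb φ N s (k+1)).q : ℤ)
            = (orb φ N t (k+1)).q + (orb φ N s k).q := by exact_mod_cast h1
        have he : ((orb φ N t (k+1)).q : ℤ) - (orb φ N s (k+1)).q
            = -((orb φ N s k).q : ℤ) := by omega
        rw [he, abs_neg, abs_of_nonneg (by positivity)]
      · have h1' : ((orb φ N t (k+1)).q : ℤ)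
            = (orb φ N s (k+1)).q + (orb φ N s k).q := by exact_mod_cast h1
        have he : ((orb φ N t (k+1)).q : ℤ) - (orb φ N s (k+1)).q
            = ((orb φ N s k).q : ℤ) := by omega
        rw [he, abs_of_nonneg (by positivity)]
    have := congrArg abs hDnum
    rw [abs_mul, abs_mul, hsabs, hqd, one_mul] at this
    have hq0Z : (0:ℤ) < (orb φ N s k).q := by exact_mod_cast hcq0
    rw [abs_of_pos hq0Z] at this
    have hmul : ((orb φ N s k).q : ℤ) * |(orb φ N s (k+1)).p * ((orb φ N t (k+1)).q : ℤ)
        - (orb φ N t (k+1)).p * (orb φ N s (k+1)).q| = ((orb φ N s k).q : ℤ) * 1 := by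
      rw [mul_one]; exact this
    exact mul_left_cancel₀ (ne_of_gt hq0Z) hmul
  have hcvdiff : |cv φ N s (k+1) - cv φ N t (k+1)| = 1 / (U * W) := by
    have hexp : cv φ N s (k+1) - cv φ N t (k+1)
        = (((orb φ N s (k+1)).p * ((orb φ N t (k+1)).q : ℤ)
            - (orb φ N t (k+1)).p * (orb φ N s (k+1)).q : ℤ) : ℝ) / (U * W) := by
      have hU0' : ((orb φ N s (k+1)).q : ℝ) ≠ 0 := ne_of_gt hU0
      have hW0' : ((orb φ N t (k+1)).q : ℝ) ≠ 0 := ne_of_gt hW0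
      unfold cv
      rw [hUdef, hWdef]
      push_cast
      field_simp
    rw [hexp, abs_div, abs_of_pos (mul_pos hU0 hW0), ← Int.cast_abs, hDabs]
    norm_num
  -- triangle inequality contradiction
  have hclose_s := alph_close h s k
  have hclose_t := alph_close h t k
  rw [hst] at hclose_s
  have htri : |cv φ N s (k+1) - cv φ N t (k+1)|
      ≤ |alph φ N t - cv φ N s (k+1)| + |alph φ N t - cv φ N t (k+1)| := by
    have := abs_sub_le (cv φ N s (k+1)) (alph φ N t) (cv φ N t (k+1))
    rw [abs_sub_comm (cv φ N s (k+1)) (alph φ N t)] at this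
    linarith
  have hb1 : (1:ℝ) / (16 * U^2) ≤ 1 / (8 * (U * W)) := by
    rw [div_le_div_iff₀ (by positivity) (by positivity)]
    nlinarith [hUW1.2]
  have hb2 : (1:ℝ) / (16 * W^2) ≤ 1 / (8 * (U * W)) := by
    rw [div_le_div_iff₀ (by positivity) (by positivity)]
    nlinarith [hUW1.1]
  have hfinal : (1:ℝ) / (U * W) < 1 / (4 * (U * W)) := by
    rw [hcvdiff] at htri
    calc (1:ℝ) / (U * W) ≤ _ := htri
      _ < 1 / (16 * U^2) + 1 / (16 * W^2) := by
          rw [hUdef, hWdef]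
          exact add_lt_add hclose_s hclose_t
      _ ≤ 1 / (8 * (U * W)) + 1 / (8 * (U * W)) := add_le_add hb1 hb2
      _ = 1 / (4 * (U * W)) := by field_simp; ring
  rw [div_lt_div_iff₀ (by positivity) (by positivity)] at hfinal
  nlinarith [mul_pos hU0 hW0]

lemma alph_uncountable (h : Hyp φ N) : ¬ (Set.range (alph φ N)).Countable := by
  intro hcnt
  have h1 : ((alph φ N) ⁻¹' (Set.range (alph φ N))).Countable :=
    hcnt.preimage (alph_inj h)
  rw [Set.preimage_range] at h1
  rw [Set.countable_univ_iff] at h1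
  have h2 : Countable (Set ℕ) := by
    have e : (ℕ → Bool) ≃ Set ℕ :=
      (Equiv.arrowCongr (Equiv.refl ℕ) Equiv.propEquivBool).symm
    exact Countable.of_equiv _ e
  obtain ⟨f, hf⟩ := Countable.exists_injective_nat (Set ℕ)
  exact Function.cantor_injective f hf

end Jarnik

/-- (Jarnik) For every decreasing function `φ : ℝ₊ → ℝ₊` with `φ(y) = o(y⁻¹)` as `y → ∞`,
there is an uncountable set of real numbers `α` such that the inequality `‖q·α‖ < φ(q)` has
infinitely many solutions in positive integers `q`, but for every `ε > 0` the inequality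
`‖q·α‖ < (1 − ε)·φ(q)` has only finitely many solutions in positive integers `q`. -/
theorem jarnik_one_dimensional
    (φ : ℝ → ℝ)
    (hφpos : ∀ x > (0:ℝ), 0 < φ x)
    (hφdec : ∀ x y : ℝ, 0 < x → x < y → φ y < φ x)
    (hφo : φ =o[Filter.atTop] fun y : ℝ => y⁻¹) :
    ∃ S : Set ℝ,
      ¬ S.Countable ∧
      ∀ α ∈ S,
        {q : ℕ | 0 < q ∧ distNearestInt (q * α) < φ q}.Infinite ∧
        ∀ ε > (0:ℝ),
          {q : ℕ | 0 < q ∧ distNearestInt (q * α) < (1 - ε) * φ q}.Finite := by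
  classical
  have hT : Filter.Tendsto (fun y : ℝ => φ y * y) Filter.atTop (nhds 0) := by
    have h1 := hφo.tendsto_div_nhds_zero
    have h2 : ∀ y : ℝ, φ y / y⁻¹ = φ y * y := fun y => by rw [div_inv_eq_mul]
    simpa [h2] using h1
  have h16 : ∀ᶠ y in Filter.atTop, φ y * y < 1/16 :=
    hT.eventually_lt_const (by norm_num)
  obtain ⟨M, hM⟩ := Filter.eventually_atTop.mp h16
  set N : ℕ := max 1 ⌈M⌉₊ with hNdef
  have hMN : M ≤ (N : ℝ) := by
    calc M ≤ (⌈M⌉₊ : ℝ) := Nat.le_ceil M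
      _ ≤ (N : ℝ) := by exact_mod_cast le_max_right 1 ⌈M⌉₊
  have hHyp : Jarnik.Hyp φ N :=
    { pos := fun x hx => hφpos x hx
      dec := hφdec
      bound := fun y hy => (hM y (le_trans hMN hy)).le
      Npos := le_max_left 1 ⌈M⌉₊ }
  refine ⟨Set.range (Jarnik.alph φ N), Jarnik.alph_uncountable hHyp, ?_⟩
  rintro α ⟨s, rfl⟩
  refine ⟨Jarnik.infinitude hHyp s, ?_⟩
  intro ε hε
  set ε' := min ε 1 with hε'def
  have hε'pos : 0 < ε' := lt_min hε one_pos
  have hε'1 : ε' ≤ 1 := min_le_right ε 1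
  have hev : ∀ᶠ y in Filter.atTop, φ y * y < ε' / 8 :=
    hT.eventually_lt_const (by positivity)
  obtain ⟨M₂, hM₂⟩ := Filter.eventually_atTop.mp hev
  set K : ℕ := ⌈M₂⌉₊ with hKdef
  have hEK : ∀ k, K ≤ k → Jarnik.E φ (Jarnik.orb φ N s k).q ≤ ε' := by
    intro k hk
    have hkq : k ≤ (Jarnik.orb φ N s k).q := by
      calc k ≤ 16 ^ k := (Nat.lt_pow_self (n := k) (by norm_num : 1 < 16)).le
        _ ≤ _ := Jarnik.orb_qpow hHyp s k
    have hQ : M₂ ≤ ((Jarnik.orb φ N s k).q : ℝ) := by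
      calc M₂ ≤ (⌈M₂⌉₊ : ℝ) := Nat.le_ceil M₂
        _ ≤ ((Jarnik.orb φ N s k).q : ℝ) := by exact_mod_cast le_trans hk hkq
    have := hM₂ _ hQ
    show 8 * (φ ((Jarnik.orb φ N s k).q : ℝ) * ((Jarnik.orb φ N s k).q : ℝ)) ≤ ε'
    linarith
  have hfin := Jarnik.finiteness hHyp s hε'pos hε'1 hEK
  apply hfin.subset
  rintro b ⟨hb0, hbdist⟩
  refine ⟨hb0, lt_of_lt_of_le hbdist ?_⟩
  have hφb : 0 < φ (b : ℝ) := hφpos _ (by exact_mod_cast hb0)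
  have : ε' ≤ ε := min_le_left ε 1
  nlinarith
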